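/- (Proposition 5, stability of the discrete divergence.) There exists a constant C > 0, depending only on Ω and the mesh-regularity constant C₀, such that |div_h v_h|_{L²(Ω)} ≤ C ‖v_h‖_h for every v_h ∈ 𝐏₀. -/

import Mathlib

noncomputable section

open MeasureTheory Finset
open scoped Classical ENNReal Topology

/-- The Euclidean plane. -/
abbrev E2 : Type := EuclideanSpace ℝ (Fin 2)

/-- The closed triangle spanned by the three vertices. -/
def triSet (v : Fin 3 → E2) : Set E2 := convexHull ℝ (Set.range v)

/-- The three edges of a triangle, each encoded as the two-element set of its endpoints. -/
def triEdges (v : Fin 3 → E2) : Finset (Finset E2) :=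
  {({v 0, v 1} : Finset E2), ({v 1, v 2} : Finset E2), ({v 0, v 2} : Finset E2)}

/-- The closed segment of an edge. -/
def edgeSet (σ : Finset E2) : Set E2 := convexHull ℝ (σ : Set E2)

/-- The length of an edge. -/
def edgeLen (σ : Finset E2) : ℝ := Metric.diam (σ : Set E2)

/-- The midpoint of an edge. -/
def edgeMid (σ : Finset E2) : E2 := (2⁻¹ : ℝ) • ∑ x ∈ σ, x

/-- The area `|K|` of a triangle. -/
def triArea (v : Fin 3 → E2) : ℝ := (volume (triSet v)).toReal

/-- A conforming triangulation of the closure of `Ω` (a finite set of nondegenerate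
closed triangles covering `closure Ω`, two distinct triangles meeting in nothing, a common
vertex or a common edge, each edge lying in at most two triangles and the edges lying
in a single triangle being contained in the boundary of `Ω`), together with the
circumcenters (assumed to lie inside the triangles, which encodes the hypothesis that
all interior angles are at most `π/2`) and the outward unit normal vectors. -/
structure FVMesh (Ω : Set E2) : Type where
  tris : Finset (Fin 3 → E2)
  indep : ∀ v ∈ tris, AffineIndependent ℝ v
  cover : (⋃ v ∈ tris, triSet v) = closure Ω
  conform : ∀ v ∈ tris, ∀ w ∈ tris, v ≠ w →
      triSet v ∩ triSet w = ∅ ∨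
      (∃ p, p ∈ Set.range v ∧ p ∈ Set.range w ∧ triSet v ∩ triSet w = {p}) ∨
      (∃ σ, σ ∈ triEdges v ∧ σ ∈ triEdges w ∧ triSet v ∩ triSet w = edgeSet σ)
  edge_count : ∀ v ∈ tris, ∀ σ ∈ triEdges v,
      (tris.filter fun w => σ ∈ triEdges w).card = 1 ∨
      (tris.filter fun w => σ ∈ triEdges w).card = 2
  bdry_edge : ∀ v ∈ tris, ∀ σ ∈ triEdges v,
      (tris.filter fun w => σ ∈ triEdges w).card = 1 → edgeSet σ ⊆ frontier Ω
  circ : (Fin 3 → E2) → E2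
  circ_equidist : ∀ v ∈ tris, ∀ i j : Fin 3, dist (circ v) (v i) = dist (circ v) (v j)
  circ_mem : ∀ v ∈ tris, circ v ∈ triSet v
  nrm : (Fin 3 → E2) → Finset E2 → E2
  nrm_unit : ∀ v ∈ tris, ∀ σ ∈ triEdges v, ‖nrm v σ‖ = 1
  nrm_orth : ∀ v ∈ tris, ∀ σ ∈ triEdges v, ∀ a ∈ σ, ∀ b ∈ σ,
      (inner ℝ (nrm v σ) (a - b) : ℝ) = 0
  nrm_outward : ∀ v ∈ tris, ∀ σ ∈ triEdges v, ∀ x ∈ triSet v,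
      (inner ℝ (nrm v σ) (x - edgeMid σ) : ℝ) ≤ 0

/-- A `𝐏₀` (piecewise constant, vector valued) function, encoded by its constant
value on each triangle. -/
abbrev P0fun : Type := (Fin 3 → E2) → E2

/-- A broken scalar function: one function of the space variable for each triangle. -/
abbrev BrokenS : Type := (Fin 3 → E2) → E2 → ℝ

/-- A broken vector-valued function. -/
abbrev BrokenV : Type := (Fin 3 → E2) → E2 → E2

def IsAffineS (g : E2 → ℝ) : Prop := ∃ φ : E2 →ᵃ[ℝ] ℝ, g = ⇑φ

def IsAffineV (g : E2 → E2) : Prop := ∃ φ : E2 →ᵃ[ℝ] E2, g = ⇑φ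

/-- The (classical) divergence of a vector field on the plane. -/
def divF (g : E2 → E2) (x : E2) : ℝ :=
  ∑ i : Fin 2, fderiv ℝ g x (EuclideanSpace.single i 1) i

/-- The (classical) vector Laplacian of a vector field on the plane. -/
def vecLap (g : E2 → E2) (x : E2) : E2 :=
  ∑ i : Fin 2,
    fderiv ℝ (fderiv ℝ g) x (EuclideanSpace.single i 1) (EuclideanSpace.single i 1)

/-- The squared `H¹(Ω)` norm of a vector field. -/
def sobH1Sq (Ω : Set E2) (g : E2 → E2) : ℝ :=
  ∫ x in Ω, (‖g x‖ ^ 2 + ‖fderiv ℝ g x‖ ^ 2)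

/-- The squared `H²(Ω)` norm of a vector field. -/
def sobH2Sq (Ω : Set E2) (g : E2 → E2) : ℝ :=
  ∫ x in Ω, (‖g x‖ ^ 2 + ‖fderiv ℝ g x‖ ^ 2 + ‖fderiv ℝ (fderiv ℝ g) x‖ ^ 2)

/-- The squared `H²(Ω)` norm of a scalar function. -/
def sobH2SqS (Ω : Set E2) (q : E2 → ℝ) : ℝ :=
  ∫ x in Ω, (q x ^ 2 + ‖fderiv ℝ q x‖ ^ 2 + ‖fderiv ℝ (fderiv ℝ q) x‖ ^ 2)

namespace FVMesh

variable {Ω : Set E2} (M : FVMesh Ω)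

/-- The set of all edges of the mesh. -/
def edges : Finset (Finset E2) := M.tris.biUnion triEdges

/-- An interior edge: an edge shared by exactly two triangles. -/
def isIntEdge (σ : Finset E2) : Prop :=
  σ ∈ M.edges ∧ (M.tris.filter fun w => σ ∈ triEdges w).card = 2

/-- A boundary edge: an edge belonging to exactly one triangle. -/
def isExtEdge (σ : Finset E2) : Prop :=
  σ ∈ M.edges ∧ (M.tris.filter fun w => σ ∈ triEdges w).card = 1

def intEdges : Finset (Finset E2) := M.edges.filter fun σ => M.isIntEdge σ

def extEdges : Finset (Finset E2) := M.edges.filter fun σ => M.isExtEdge σ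

/-- `K_σ` : a triangle having `σ` as one of its edges. -/
def Kof (σ : Finset E2) : Fin 3 → E2 :=
  if h : ∃ v, v ∈ M.tris ∧ σ ∈ triEdges v then h.choose else fun _ => 0

/-- The triangle on the other side of the edge `σ` of `K` (for an interior edge). -/
def nbr (σ : Finset E2) (K : Fin 3 → E2) : Fin 3 → E2 :=
  if h : ∃ w, w ∈ M.tris ∧ σ ∈ triEdges w ∧ w ≠ K then h.choose else K

/-- `L_σ` : the second triangle having an interior edge `σ` as one of its edges. -/
def Lof (σ : Finset E2) : Fin 3 → E2 := M.nbr σ (M.Kof σ)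

/-- The circumradius of a triangle. -/
def circumradius (v : Fin 3 → E2) : ℝ := dist (M.circ v) (v 0)

/-- `h` : the maximal circumradius of the triangles of the mesh. -/
def meshSize : ℝ := ⨆ v : M.tris, M.circumradius v

/-- `d_σ`. -/
def dEdge (σ : Finset E2) : ℝ :=
  if M.isIntEdge σ then dist (M.circ (M.Kof σ)) (M.circ (M.Lof σ))
  else dist (edgeMid σ) (M.circ (M.Kof σ))

/-- `τ_σ = |σ| / d_σ`. -/
def tauEdge (σ : Finset E2) : ℝ := edgeLen σ / M.dEdge σ

/-- Mesh regularity with constant `C₀` : `dist(x_{K_σ}, σ) ≥ C₀ |σ|` and `|σ| ≥ C₀ h`. -/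
def regular (C₀ : ℝ) : Prop :=
  ∀ σ ∈ M.edges,
    C₀ * edgeLen σ ≤ Metric.infDist (M.circ (M.Kof σ)) (edgeSet σ) ∧
    C₀ * M.meshSize ≤ edgeLen σ

/-- The square of the discrete `H¹` norm `‖·‖_h` on `𝐏₀`. -/
def normhSq (c : P0fun) : ℝ :=
  ∑ σ ∈ M.intEdges, M.tauEdge σ * ‖c (M.Lof σ) - c (M.Kof σ)‖ ^ 2
    + ∑ σ ∈ M.extEdges, M.tauEdge σ * ‖c (M.Kof σ)‖ ^ 2

/-- The discrete `H¹` norm `‖·‖_h` on `𝐏₀`. -/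
def normh (c : P0fun) : ℝ := Real.sqrt (M.normhSq c)

/-- The `L²(Ω)` inner product of two `𝐏₀` functions. -/
def innerP0 (c d : P0fun) : ℝ := ∑ K ∈ M.tris, triArea K * (inner ℝ (c K) (d K) : ℝ)

/-- The `L²(Ω)` norm of a `𝐏₀` function. -/
def normL2P0 (c : P0fun) : ℝ := Real.sqrt (∑ K ∈ M.tris, triArea K * ‖c K‖ ^ 2)

/-- The dual norm `‖·‖_{-1,h}` on `𝐏₀`. -/
def normDual (c : P0fun) : ℝ :=
  sSup { r : ℝ | ∃ ψ : P0fun, M.normh ψ ≠ 0 ∧ r = M.innerP0 c ψ / M.normh ψ }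

/-- The discrete Laplacian `Δ̃_h` on `𝐏₀`. -/
def discLap (c : P0fun) : P0fun := fun K =>
  (triArea K)⁻¹ •
    ((∑ σ ∈ (triEdges K).filter (fun σ => M.isIntEdge σ),
        M.tauEdge σ • (c (M.nbr σ K) - c K))
      - ∑ σ ∈ (triEdges K).filter (fun σ => M.isExtEdge σ), M.tauEdge σ • c K)

/-- The value of the discrete divergence `div_h c` at the midpoint of the edge `σ`. -/
def divhVal (c : P0fun) (σ : Finset E2) : ℝ :=
  if M.isIntEdge σ then
    (3 * edgeLen σ / (triArea (M.Kof σ) + triArea (M.Lof σ))) *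
      (inner ℝ (c (M.Lof σ) - c (M.Kof σ)) (M.nrm (M.Kof σ) σ) : ℝ)
  else
    -(3 * edgeLen σ / triArea (M.Kof σ)) * (inner ℝ (c (M.Kof σ)) (M.nrm (M.Kof σ) σ) : ℝ)

/-- Membership in the Crouzeix–Raviart space `P₁^{nc}` (scalar case): piecewise affine,
continuous at the midpoints of interior edges. -/
def IsCR (q : BrokenS) : Prop :=
  (∀ K ∈ M.tris, IsAffineS (q K)) ∧
  ∀ σ ∈ M.intEdges, q (M.Kof σ) (edgeMid σ) = q (M.Lof σ) (edgeMid σ)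

/-- Membership in `𝐏₁^{nc} = (P₁^{nc})²`. -/
def IsCRV (q : BrokenV) : Prop :=
  (∀ K ∈ M.tris, IsAffineV (q K)) ∧
  ∀ σ ∈ M.intEdges, q (M.Kof σ) (edgeMid σ) = q (M.Lof σ) (edgeMid σ)

/-- `D` is the Crouzeix–Raviart function `div_h c`. -/
def IsDivh (c : P0fun) (D : BrokenS) : Prop :=
  M.IsCR D ∧ ∀ K ∈ M.tris, ∀ σ ∈ triEdges K, D K (edgeMid σ) = M.divhVal c σ

/-- Membership in the lowest-order Raviart–Thomas space `RT₀`: on each triangle of the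
form `a_K + b_K x`, normal component continuous across interior edges, and vanishing
normal component on the boundary. -/
def IsRT0 (w : BrokenV) : Prop :=
  (∀ K ∈ M.tris, ∃ a : E2, ∃ b : ℝ, w K = fun x => a + b • x) ∧
  (∀ σ ∈ M.intEdges, ∀ x ∈ edgeSet σ,
    (inner ℝ (w (M.Kof σ) x) (M.nrm (M.Kof σ) σ) : ℝ) =
      inner ℝ (w (M.Lof σ) x) (M.nrm (M.Kof σ) σ)) ∧
  (∀ σ ∈ M.extEdges, ∀ x ∈ edgeSet σ,
    (inner ℝ (w (M.Kof σ) x) (M.nrm (M.Kof σ) σ) : ℝ) = 0)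

/-- Membership of a `𝐏₀` function in `𝐏₀ ∩ RT₀` : the normal component of the
piecewise-constant field is continuous across interior edges and vanishes on boundary
edges. -/
def P0inRT0 (c : P0fun) : Prop :=
  (∀ σ ∈ M.intEdges,
    (inner ℝ (c (M.Kof σ)) (M.nrm (M.Kof σ) σ) : ℝ) =
      inner ℝ (c (M.Lof σ)) (M.nrm (M.Kof σ) σ)) ∧
  (∀ σ ∈ M.extEdges, (inner ℝ (c (M.Kof σ)) (M.nrm (M.Kof σ) σ) : ℝ) = 0)

/-- The discrete gradient `∇_h` of a broken affine (Crouzeix–Raviart) function: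
on each triangle, the (constant) gradient of the affine piece. -/
def gradh (q : BrokenS) : P0fun := fun K => gradient (q K) (M.circ K)

/-- The upwind convection term `b̃_h(d, c)` for a convecting field `d ∈ 𝐏₀ ∩ RT₀`. -/
def btilde (d c : P0fun) : P0fun := fun K =>
  (triArea K)⁻¹ •
    ∑ σ ∈ (triEdges K).filter (fun σ => M.isIntEdge σ),
      edgeLen σ • ((max (inner ℝ (d K) (M.nrm K σ) : ℝ) 0) • c K
        + (min (inner ℝ (d K) (M.nrm K σ) : ℝ) 0) • c (M.nbr σ K))

/-- The trilinear form `b_h` for a convecting field in `𝐏₀ ∩ RT₀`. -/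
def bform (d c w : P0fun) : ℝ :=
  ∑ K ∈ M.tris, triArea K * (inner ℝ (w K) (M.btilde d c K) : ℝ)

/-- The upwind convection term `b̃_h(u, c)` for a convecting field `u ∈ RT₀`. -/
def btildeRT (u : BrokenV) (c : P0fun) : P0fun := fun K =>
  (triArea K)⁻¹ •
    ∑ σ ∈ (triEdges K).filter (fun σ => M.isIntEdge σ),
      edgeLen σ • ((max (inner ℝ (u K (edgeMid σ)) (M.nrm K σ) : ℝ) 0) • c K
        + (min (inner ℝ (u K (edgeMid σ)) (M.nrm K σ) : ℝ) 0) • c (M.nbr σ K))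

/-- The trilinear form `b_h`. -/
def bformRT (u : BrokenV) (c w : P0fun) : ℝ :=
  ∑ K ∈ M.tris, triArea K * (inner ℝ (w K) (M.btildeRT u c K) : ℝ)

/-- The `L²(Ω)` norm of the piecewise-constant projection error `v - Π̃_{𝐏₀} v`,
where `(Π̃_{𝐏₀} v)|_K = v(x_K)`. -/
def errTildeP0 (g : E2 → E2) : ℝ :=
  Real.sqrt (∑ K ∈ M.tris, ∫ x in triSet K, ‖g x - g (M.circ K)‖ ^ 2)

end FVMesh


section Stmt9Aux

open Pointwise

lemma stmt9_inner_coords (u w : E2) : (inner ℝ u w : ℝ) = u 0 * w 0 + u 1 * w 1 := by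
  rw [PiLp.inner_apply]; simp [Fin.sum_univ_two, RCLike.inner_apply, mul_comm]

lemma stmt9_norm_coords (u : E2) : ‖u‖ = Real.sqrt (u 0 ^ 2 + u 1 ^ 2) := by
  rw [EuclideanSpace.norm_eq]; simp [Fin.sum_univ_two, Real.norm_eq_abs, sq_abs]

lemma stmt9_vol_lb (u w m : E2) (h : (inner ℝ u w : ℝ) = 0) (S : Set E2)
    (hS : ∀ α β : ℝ, |α| ≤ 4⁻¹ → 0 ≤ β → β ≤ 2⁻¹ → m + α • u + β • w ∈ S) :
    ENNReal.ofReal (4⁻¹ * (‖u‖ * ‖w‖)) ≤ volume S := by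
  classical
  set b := (EuclideanSpace.basisFun (Fin 2) ℝ).toBasis with hb
  set f : E2 →ₗ[ℝ] E2 := b.constr ℝ ![u, w] with hf
  have hfp : ∀ p : E2, f p = p 0 • u + p 1 • w := by
    intro p
    rw [hf, Module.Basis.constr_apply_fintype]
    simp only [hb, Module.Basis.equivFun_apply, OrthonormalBasis.coe_toBasis_repr_apply,
      EuclideanSpace.basisFun_repr]
    simp [Fin.sum_univ_two]
  have hcoord : u 0 * w 0 + u 1 * w 1 = 0 := by rw [← stmt9_inner_coords]; exact h
  have hdet : |LinearMap.det f| = ‖u‖ * ‖w‖ := by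
    have hM : LinearMap.det f = u 0 * w 1 - w 0 * u 1 := by
      rw [← LinearMap.det_toMatrix b f, Matrix.det_fin_two]
      have h00 : LinearMap.toMatrix b b f 0 0 = u 0 := by
        rw [LinearMap.toMatrix_apply, Module.Basis.constr_basis]
        simp [hb, OrthonormalBasis.coe_toBasis_repr_apply, EuclideanSpace.basisFun_repr]
      have h10 : LinearMap.toMatrix b b f 1 0 = u 1 := by
        rw [LinearMap.toMatrix_apply, Module.Basis.constr_basis]
        simp [hb, OrthonormalBasis.coe_toBasis_repr_apply, EuclideanSpace.basisFun_repr]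
      have h01 : LinearMap.toMatrix b b f 0 1 = w 0 := by
        rw [LinearMap.toMatrix_apply, Module.Basis.constr_basis]
        simp [hb, OrthonormalBasis.coe_toBasis_repr_apply, EuclideanSpace.basisFun_repr]
      have h11 : LinearMap.toMatrix b b f 1 1 = w 1 := by
        rw [LinearMap.toMatrix_apply, Module.Basis.constr_basis]
        simp [hb, OrthonormalBasis.coe_toBasis_repr_apply, EuclideanSpace.basisFun_repr]
      rw [h00, h10, h01, h11]
    have hsq : (u 0 * w 1 - w 0 * u 1) ^ 2 = (u 0 ^ 2 + u 1 ^ 2) * (w 0 ^ 2 + w 1 ^ 2) := by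
      nlinarith [hcoord]
    rw [hM, ← Real.sqrt_sq_eq_abs, hsq, Real.sqrt_mul (by positivity), stmt9_norm_coords u,
      stmt9_norm_coords w]
  set B : Set E2 := (MeasurableEquiv.toLp 2 (Fin 2 → ℝ)).symm ⁻¹'
      (Set.univ.pi ![Set.Icc (-4⁻¹) 4⁻¹, Set.Icc 0 2⁻¹]) with hBdef
  have hvolB : volume B = ENNReal.ofReal 4⁻¹ := by
    rw [hBdef, (EuclideanSpace.volume_preserving_symm_measurableEquiv_toLp (Fin 2)).measure_preimage
      ((MeasurableSet.univ_pi (fun i => by fin_cases i <;> exact measurableSet_Icc)).nullMeasurableSet)]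
    rw [volume_pi_pi]
    rw [Fin.prod_univ_two]
    simp only [Matrix.cons_val_zero, Matrix.cons_val_one, Matrix.head_cons, Real.volume_Icc]
    rw [← ENNReal.ofReal_mul (by norm_num)]
    norm_num
  have hsub : m +ᵥ (⇑f '' B) ⊆ S := by
    rintro y ⟨z, ⟨p, hp, rfl⟩, rfl⟩
    have hp' : ∀ i, (MeasurableEquiv.toLp 2 (Fin 2 → ℝ)).symm p i ∈
        (![Set.Icc (-4⁻¹) 4⁻¹, Set.Icc 0 2⁻¹] : Fin 2 → Set ℝ) i := by
      intro i; exact (Set.mem_univ_pi.1 hp) i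
    have h0 : p 0 ∈ Set.Icc (-(4:ℝ)⁻¹) 4⁻¹ := by simpa using hp' 0
    have h1 : p 1 ∈ Set.Icc (0:ℝ) 2⁻¹ := by simpa using hp' 1
    show m +ᵥ f p ∈ S
    have : m +ᵥ f p = m + p 0 • u + p 1 • w := by
      rw [hfp p]; simp [vadd_eq_add, add_assoc]
    rw [this]
    exact hS _ _ (abs_le.2 ⟨h0.1, h0.2⟩) h1.1 h1.2
  calc ENNReal.ofReal (4⁻¹ * (‖u‖ * ‖w‖))
      = ENNReal.ofReal (‖u‖ * ‖w‖) * ENNReal.ofReal 4⁻¹ := by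
        rw [← ENNReal.ofReal_mul (by positivity)]; ring_nf
    _ = ENNReal.ofReal |LinearMap.det f| * volume B := by rw [hdet, hvolB]
    _ = volume (⇑f '' B) := (MeasureTheory.Measure.addHaar_image_linearMap volume f B).symm
    _ = volume (m +ᵥ (⇑f '' B)) := (measure_vadd volume m _).symm
    _ ≤ volume S := measure_mono hsub

lemma stmt9_triSet_compact (v : Fin 3 → E2) : IsCompact (triSet v) :=
  (Set.finite_range v).isCompact_convexHull ℝ

lemma stmt9_area_lb (v : Fin 3 → E2) (x a b : E2) (ha : a ∈ triSet v) (hb : b ∈ triSet v)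
    (hx : x ∈ triSet v) (hd : dist x a = dist x b) :
    4⁻¹ * (dist a b * dist x ((2:ℝ)⁻¹ • (a + b))) ≤ triArea v := by
  set m : E2 := (2:ℝ)⁻¹ • (a + b) with hm
  set u : E2 := b - a with hu
  set w : E2 := x - m with hw
  have h1 : x - a = w + (2:ℝ)⁻¹ • u := by rw [hw, hu, hm]; module
  have h2 : x - b = w - (2:ℝ)⁻¹ • u := by rw [hw, hu, hm]; module
  have hinner : (inner ℝ u w : ℝ) = 0 := by
    have hnn : ‖x - a‖ = ‖x - b‖ := by rw [← dist_eq_norm, ← dist_eq_norm, hd]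
    rw [h1, h2] at hnn
    set z : E2 := (2:ℝ)⁻¹ • u with hz
    have hsq : ‖w + z‖ ^ 2 = ‖w - z‖ ^ 2 := by rw [hnn]
    have e1 := norm_add_sq_real w z
    have e2 := norm_sub_sq_real w z
    have h3 : (inner ℝ w z : ℝ) = 0 := by linarith
    rw [hz, real_inner_smul_right] at h3
    have h4 : (inner ℝ w u : ℝ) = 0 := by linarith
    rw [real_inner_comm]; exact h4
  have hS : ∀ α β : ℝ, |α| ≤ 4⁻¹ → 0 ≤ β → β ≤ 2⁻¹ → m + α • u + β • w ∈ triSet v := by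
    intro α β hα hβ0 hβ
    have hconv : Convex ℝ (triSet v) := convex_convexHull ℝ _
    have h1β : (0:ℝ) < 1 - β := by linarith
    set t : ℝ := 2⁻¹ + α / (1 - β) with ht
    have habs : |α / (1 - β)| ≤ 2⁻¹ := by
      rw [abs_div, abs_of_pos h1β, div_le_iff₀ h1β]
      nlinarith
    have ht0 : 0 ≤ t := by
      have := abs_le.1 habs; rw [ht]; linarith [this.1]
    have ht1 : t ≤ 1 := by
      have := abs_le.1 habs; rw [ht]; linarith [this.2]
    have hq : a + t • (b - a) ∈ triSet v := hconv.add_smul_sub_mem ha hb ⟨ht0, ht1⟩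
    have hmem : (1 - β) • (a + t • (b - a)) + β • x ∈ triSet v :=
      hconv hq hx (by linarith) hβ0 (by ring)
    have heq : m + α • u + β • w = (1 - β) • (a + t • (b - a)) + β • x := by
      rw [hm, hu, hw, hm, ht]
      match_scalars <;> field_simp <;> ring
    rw [heq]; exact hmem
  have hv := stmt9_vol_lb u w m hinner (triSet v) hS
  have hfin : volume (triSet v) ≠ ⊤ := (stmt9_triSet_compact v).measure_lt_top.ne
  rw [ENNReal.ofReal_le_iff_le_toReal hfin] at hv
  have e1 : dist a b = ‖u‖ := by rw [hu, dist_eq_norm']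
  have e2 : dist x m = ‖w‖ := by rw [hw, dist_eq_norm]
  rw [e1, e2]; exact hv

lemma stmt9_affine_abs_le (φ : E2 →ᵃ[ℝ] ℝ) (v : Fin 3 → E2) (x : E2) (hx : x ∈ triSet v) :
    ∃ i, |φ x| ≤ |φ (v i)| := by
  have hc : ConvexOn ℝ Set.univ (fun y : E2 => ‖φ y‖) := by
    have := (convexOn_univ_norm (E := ℝ)).comp_affineMap φ
    exact this
  obtain ⟨y, hy, hle⟩ := hc.exists_ge_of_mem_convexHull (Set.subset_univ _) hx
  obtain ⟨i, rfl⟩ := hy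
  exact ⟨i, by simpa [Real.norm_eq_abs] using hle⟩

lemma stmt9_vertex_eq (φ : E2 →ᵃ[ℝ] ℝ) (a b c : E2) :
    φ a = φ ((2:ℝ)⁻¹ • (a + b)) + φ ((2:ℝ)⁻¹ • (a + c)) - φ ((2:ℝ)⁻¹ • (b + c)) := by
  have h := φ.decomp
  have ha : ∀ z : E2, φ z = φ.linear z + φ 0 := by
    intro z; conv_lhs => rw [h]
    rfl
  rw [ha a, ha ((2:ℝ)⁻¹ • (a + b)), ha ((2:ℝ)⁻¹ • (a + c)), ha ((2:ℝ)⁻¹ • (b + c))]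
  have key : a = (2:ℝ)⁻¹ • (a + b) + ((2:ℝ)⁻¹ • (a + c) - (2:ℝ)⁻¹ • (b + c)) := by module
  have hlin : φ.linear a = φ.linear ((2:ℝ)⁻¹ • (a + b)) + φ.linear ((2:ℝ)⁻¹ • (a + c))
      - φ.linear ((2:ℝ)⁻¹ • (b + c)) := by
    conv_lhs => rw [key]
    rw [map_add, map_sub]; ring
  rw [hlin]; ring

lemma stmt9_triEdges_insert (v : Fin 3 → E2) : triEdges v =
    insert ({v 0, v 1} : Finset E2)
      (insert ({v 1, v 2} : Finset E2) {({v 0, v 2} : Finset E2)}) := rfl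

lemma stmt9_edges_ne (v : Fin 3 → E2) (hinj : Function.Injective v) :
    ({v 0, v 1} : Finset E2) ≠ ({v 1, v 2} : Finset E2) ∧
    ({v 0, v 1} : Finset E2) ≠ ({v 0, v 2} : Finset E2) ∧
    ({v 1, v 2} : Finset E2) ≠ ({v 0, v 2} : Finset E2) := by
  have hne : ∀ i j : Fin 3, i ≠ j → v i ≠ v j := fun i j hij h => hij (hinj h)
  refine ⟨fun h => ?_, fun h => ?_, fun h => ?_⟩
  · have : v 0 ∈ ({v 1, v 2} : Finset E2) := h ▸ (by simp)
    simp only [Finset.mem_insert, Finset.mem_singleton] at this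
    rcases this with h' | h'
    · exact hne 0 1 (by decide) h'
    · exact hne 0 2 (by decide) h'
  · have : v 1 ∈ ({v 0, v 2} : Finset E2) := h ▸ (by simp)
    simp only [Finset.mem_insert, Finset.mem_singleton] at this
    rcases this with h' | h'
    · exact hne 1 0 (by decide) h'
    · exact hne 1 2 (by decide) h'
  · have : v 1 ∈ ({v 0, v 2} : Finset E2) := h ▸ (by simp)
    simp only [Finset.mem_insert, Finset.mem_singleton] at this
    rcases this with h' | h'
    · exact hne 1 0 (by decide) h'
    · exact hne 1 2 (by decide) h'

lemma stmt9_sum_triEdges (v : Fin 3 → E2) (hinj : Function.Injective v) (f : Finset E2 → ℝ) :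
    ∑ σ ∈ triEdges v, f σ =
      f ({v 0, v 1} : Finset E2) + f ({v 1, v 2} : Finset E2) + f ({v 0, v 2} : Finset E2) := by
  obtain ⟨h1, h2, h3⟩ := stmt9_edges_ne v hinj
  rw [stmt9_triEdges_insert, Finset.sum_insert (by simp [h1, h2]),
    Finset.sum_insert (by simp [h3]), Finset.sum_singleton]
  ring

lemma stmt9_tri_int_bound (v : Fin 3 → E2) (hinj : Function.Injective v) (φ : E2 →ᵃ[ℝ] ℝ)
    (g : Finset E2 → ℝ) (hg : ∀ σ ∈ triEdges v, φ (edgeMid σ) = g σ) :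
    ∫ x in triSet v, (φ x) ^ 2 ≤ triArea v * (3 * ∑ σ ∈ triEdges v, (g σ) ^ 2) := by
  have hne : ∀ i j : Fin 3, i ≠ j → v i ≠ v j := fun i j hij h => hij (hinj h)
  have hm01 : edgeMid ({v 0, v 1} : Finset E2) = (2:ℝ)⁻¹ • (v 0 + v 1) := by
    rw [edgeMid, Finset.sum_pair (hne 0 1 (by decide))]
  have hm12 : edgeMid ({v 1, v 2} : Finset E2) = (2:ℝ)⁻¹ • (v 1 + v 2) := by
    rw [edgeMid, Finset.sum_pair (hne 1 2 (by decide))]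
  have hm02 : edgeMid ({v 0, v 2} : Finset E2) = (2:ℝ)⁻¹ • (v 0 + v 2) := by
    rw [edgeMid, Finset.sum_pair (hne 0 2 (by decide))]
  set d1 : ℝ := g ({v 0, v 1} : Finset E2) with hd1
  set d2 : ℝ := g ({v 1, v 2} : Finset E2) with hd2
  set d3 : ℝ := g ({v 0, v 2} : Finset E2) with hd3
  have hg1 : φ ((2:ℝ)⁻¹ • (v 0 + v 1)) = d1 := by
    rw [← hm01]; exact hg _ (by simp [triEdges])
  have hg2 : φ ((2:ℝ)⁻¹ • (v 1 + v 2)) = d2 := by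
    rw [← hm12]; exact hg _ (by simp [triEdges])
  have hg3 : φ ((2:ℝ)⁻¹ • (v 0 + v 2)) = d3 := by
    rw [← hm02]; exact hg _ (by simp [triEdges])
  set Q : ℝ := 3 * (d1 ^ 2 + d2 ^ 2 + d3 ^ 2) with hQ
  have hvert : ∀ i : Fin 3, |φ (v i)| ≤ |d1| + |d2| + |d3| := by
    intro i
    fin_cases i
    · show |φ (v 0)| ≤ |d1| + |d2| + |d3|
      have := stmt9_vertex_eq φ (v 0) (v 1) (v 2)
      rw [hg1, hg3, hg2] at this
      rw [this]
      calc |d1 + d3 - d2| ≤ |d1| + |d3| + |d2| := by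
            calc |d1 + d3 - d2| ≤ |d1 + d3| + |d2| := abs_sub _ _
              _ ≤ |d1| + |d3| + |d2| := by linarith [abs_add_le d1 d3]
        _ = |d1| + |d2| + |d3| := by ring
    · show |φ (v 1)| ≤ |d1| + |d2| + |d3|
      have := stmt9_vertex_eq φ (v 1) (v 0) (v 2)
      rw [show v 1 + v 0 = v 0 + v 1 from add_comm _ _] at this
      rw [hg1, hg2, hg3] at this
      rw [this]
      calc |d1 + d2 - d3| ≤ |d1 + d2| + |d3| := abs_sub _ _
        _ ≤ |d1| + |d2| + |d3| := by linarith [abs_add_le d1 d2]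
    · show |φ (v 2)| ≤ |d1| + |d2| + |d3|
      have := stmt9_vertex_eq φ (v 2) (v 1) (v 0)
      rw [show v 2 + v 1 = v 1 + v 2 from add_comm _ _,
        show v 2 + v 0 = v 0 + v 2 from add_comm _ _,
        show v 1 + v 0 = v 0 + v 1 from add_comm _ _] at this
      rw [hg2, hg3, hg1] at this
      rw [this]
      calc |d2 + d3 - d1| ≤ |d2 + d3| + |d1| := abs_sub _ _
        _ ≤ |d1| + |d2| + |d3| := by linarith [abs_add_le d2 d3]
  have hptwise : ∀ x ∈ triSet v, (φ x) ^ 2 ≤ Q := by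
    intro x hx
    obtain ⟨i, hi⟩ := stmt9_affine_abs_le φ v x hx
    have hB : |φ x| ≤ |d1| + |d2| + |d3| := hi.trans (hvert i)
    have h1 : (φ x) ^ 2 ≤ (|d1| + |d2| + |d3|) ^ 2 := by
      rw [← sq_abs (φ x)]
      exact pow_le_pow_left₀ (abs_nonneg _) hB 2
    have h2 : (|d1| + |d2| + |d3|) ^ 2 ≤ Q := by
      rw [hQ]
      nlinarith [sq_abs d1, sq_abs d2, sq_abs d3, sq_nonneg (|d1| - |d2|),
        sq_nonneg (|d1| - |d3|), sq_nonneg (|d2| - |d3|)]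
    linarith
  have hκ : IsCompact (triSet v) := stmt9_triSet_compact v
  have hmeas : MeasurableSet (triSet v) := hκ.isClosed.measurableSet
  have hcont : Continuous fun x : E2 => (φ x) ^ 2 :=
    (φ.continuous_of_finiteDimensional).pow 2
  have hint : IntegrableOn (fun x : E2 => (φ x) ^ 2) (triSet v) volume :=
    hcont.continuousOn.integrableOn_compact hκ
  have hintc : IntegrableOn (fun _ : E2 => Q) (triSet v) volume :=
    integrableOn_const hκ.measure_lt_top.ne
  calc ∫ x in triSet v, (φ x) ^ 2 ≤ ∫ _x in triSet v, Q :=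
        setIntegral_mono_on hint hintc hmeas hptwise
    _ = triArea v * Q := by rw [setIntegral_const, smul_eq_mul, triArea, Measure.real]
    _ = triArea v * (3 * ∑ σ ∈ triEdges v, (g σ) ^ 2) := by
        rw [stmt9_sum_triEdges v hinj fun σ => (g σ) ^ 2, hQ]

variable {Ω : Set E2} (M : FVMesh Ω)

lemma stmt9_Kof_spec {σ : Finset E2} (hσ : σ ∈ M.edges) :
    M.Kof σ ∈ M.tris ∧ σ ∈ triEdges (M.Kof σ) := by
  rw [FVMesh.edges, Finset.mem_biUnion] at hσ
  obtain ⟨v, hv, h⟩ := hσ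
  have h' : ∃ v, v ∈ M.tris ∧ σ ∈ triEdges v := ⟨v, hv, h⟩
  rw [FVMesh.Kof, dif_pos h']
  exact h'.choose_spec

lemma stmt9_edge_card {σ : Finset E2} (hσ : σ ∈ M.edges) :
    (M.tris.filter fun w => σ ∈ triEdges w).card = 1 ∨
    (M.tris.filter fun w => σ ∈ triEdges w).card = 2 :=
  M.edge_count _ (stmt9_Kof_spec M hσ).1 _ (stmt9_Kof_spec M hσ).2

lemma stmt9_Lof_spec {σ : Finset E2} (hσ : M.isIntEdge σ) :
    M.Lof σ ∈ M.tris ∧ σ ∈ triEdges (M.Lof σ) ∧ M.Lof σ ≠ M.Kof σ := by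
  obtain ⟨hedge, hcard⟩ := hσ
  have h2 : ∃ w, w ∈ M.tris ∧ σ ∈ triEdges w ∧ w ≠ M.Kof σ := by
    have h1 : 1 < (M.tris.filter fun w => σ ∈ triEdges w).card := by rw [hcard]; norm_num
    obtain ⟨x, hx, y, hy, hxy⟩ := Finset.one_lt_card.1 h1
    rw [Finset.mem_filter] at hx hy
    by_cases hxK : x = M.Kof σ
    · exact ⟨y, hy.1, hy.2, fun h => hxy (hxK.trans h.symm)⟩
    · exact ⟨x, hx.1, hx.2, hxK⟩
  rw [FVMesh.Lof, FVMesh.nbr, dif_pos h2]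
  exact h2.choose_spec

lemma stmt9_filter_int_eq {σ : Finset E2} (hσ : M.isIntEdge σ) :
    M.tris.filter (fun w => σ ∈ triEdges w) = {M.Kof σ, M.Lof σ} := by
  obtain ⟨hedge, hcard⟩ := hσ
  obtain ⟨hK, hKe⟩ := stmt9_Kof_spec M hedge
  obtain ⟨hL, hLe, hLK⟩ := stmt9_Lof_spec M ⟨hedge, hcard⟩
  have hsub : ({M.Kof σ, M.Lof σ} : Finset _) ⊆ M.tris.filter (fun w => σ ∈ triEdges w) := by
    intro z hz
    rcases Finset.mem_insert.1 hz with rfl | hz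
    · exact Finset.mem_filter.2 ⟨hK, hKe⟩
    · rw [Finset.mem_singleton] at hz; subst hz; exact Finset.mem_filter.2 ⟨hL, hLe⟩
  have hcard2 : ({M.Kof σ, M.Lof σ} : Finset _).card = 2 := Finset.card_pair (Ne.symm hLK)
  exact (Finset.eq_of_subset_of_card_le hsub (by rw [hcard, hcard2])).symm

lemma stmt9_filter_ext_eq {σ : Finset E2} (hσ : M.isExtEdge σ) :
    M.tris.filter (fun w => σ ∈ triEdges w) = {M.Kof σ} := by
  obtain ⟨hedge, hcard⟩ := hσ
  obtain ⟨hK, hKe⟩ := stmt9_Kof_spec M hedge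
  obtain ⟨a, ha⟩ := Finset.card_eq_one.1 hcard
  have hmem : M.Kof σ ∈ M.tris.filter (fun w => σ ∈ triEdges w) := Finset.mem_filter.2 ⟨hK, hKe⟩
  rw [ha] at hmem ⊢
  rw [Finset.mem_singleton] at hmem
  rw [hmem]

lemma stmt9_edge_form {v : Fin 3 → E2} {σ : Finset E2} (hσ : σ ∈ triEdges v) :
    ∃ i j : Fin 3, i ≠ j ∧ σ = ({v i, v j} : Finset E2) := by
  simp only [triEdges, Finset.mem_insert, Finset.mem_singleton] at hσ
  rcases hσ with h | h | h
  · exact ⟨0, 1, by decide, h⟩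
  · exact ⟨1, 2, by decide, h⟩
  · exact ⟨0, 2, by decide, h⟩

lemma stmt9_edgeLen_pair {a b : E2} : edgeLen ({a, b} : Finset E2) = dist a b := by
  rw [edgeLen]
  simp only [Finset.coe_insert, Finset.coe_singleton]
  exact Metric.diam_pair

lemma stmt9_edgeMid_pair {a b : E2} (h : a ≠ b) :
    edgeMid ({a, b} : Finset E2) = (2:ℝ)⁻¹ • (a + b) := by
  rw [edgeMid, Finset.sum_pair h]

lemma stmt9_edgeMid_mem {a b : E2} (h : a ≠ b) :
    edgeMid ({a, b} : Finset E2) ∈ edgeSet ({a, b} : Finset E2) := by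
  rw [stmt9_edgeMid_pair h, edgeSet]
  simp only [Finset.coe_insert, Finset.coe_singleton]
  have ha : a ∈ convexHull ℝ ({a, b} : Set E2) := subset_convexHull _ _ (by simp)
  have hb : b ∈ convexHull ℝ ({a, b} : Set E2) := subset_convexHull _ _ (by simp)
  have hmem := (convex_convexHull ℝ ({a, b} : Set E2)) ha hb
    (by norm_num : (0:ℝ) ≤ 2⁻¹) (by norm_num : (0:ℝ) ≤ 2⁻¹) (by norm_num)
  convert hmem using 1
  module

lemma stmt9_edge_facts {v : Fin 3 → E2} {σ : Finset E2} (hv : v ∈ M.tris)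
    (hσ : σ ∈ triEdges v) :
    ∃ a b : E2, a ≠ b ∧ σ = ({a, b} : Finset E2) ∧ (∃ i, v i = a) ∧ (∃ j, v j = b) ∧
      dist (M.circ v) a = dist (M.circ v) b ∧
      0 < edgeLen σ ∧ edgeMid σ = (2:ℝ)⁻¹ • (a + b) ∧ edgeMid σ ∈ edgeSet σ ∧
      edgeLen σ = dist a b ∧ a ∈ triSet v ∧ b ∈ triSet v := by
  obtain ⟨i, j, hij, rfl⟩ := stmt9_edge_form hσ
  have hinj := (M.indep v hv).injective
  have hab : v i ≠ v j := fun h => hij (hinj h)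
  refine ⟨v i, v j, hab, rfl, ⟨i, rfl⟩, ⟨j, rfl⟩, M.circ_equidist v hv i j, ?_,
    stmt9_edgeMid_pair hab, stmt9_edgeMid_mem hab, stmt9_edgeLen_pair, ?_, ?_⟩
  · rw [stmt9_edgeLen_pair]; exact dist_pos.2 hab
  · exact subset_convexHull _ _ ⟨i, rfl⟩
  · exact subset_convexHull _ _ ⟨j, rfl⟩

lemma stmt9_circumradius_le {v : Fin 3 → E2} (hv : v ∈ M.tris) :
    M.circumradius v ≤ M.meshSize := by
  have hB : BddAbove (Set.range fun t : M.tris => M.circumradius t.1) :=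
    Set.Finite.bddAbove (Set.finite_range _)
  exact le_ciSup hB ⟨v, hv⟩

lemma stmt9_dist_circ_vertex {v : Fin 3 → E2} (hv : v ∈ M.tris) (i : Fin 3) :
    dist (M.circ v) (v i) ≤ M.meshSize :=
  le_trans (le_of_eq (M.circ_equidist v hv i 0)) (stmt9_circumradius_le M hv)

lemma stmt9_area_lower {C₀ : ℝ} (hreg : M.regular C₀) (hC₀ : 0 < C₀) {σ : Finset E2}
    (hσ : σ ∈ M.edges) :
    C₀ * edgeLen σ ^ 2 / 4 ≤ triArea (M.Kof σ) := by
  obtain ⟨hK, hKe⟩ := stmt9_Kof_spec M hσ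
  obtain ⟨a, b, hab, hσeq, _, _, hdist, hlenpos, hmid, hmidmem, hlen, haK, hbK⟩ :=
    stmt9_edge_facts M hK hKe
  have harea := stmt9_area_lb (M.Kof σ) (M.circ (M.Kof σ)) a b haK hbK (M.circ_mem _ hK) hdist
  have h1 : Metric.infDist (M.circ (M.Kof σ)) (edgeSet σ) ≤
      dist (M.circ (M.Kof σ)) ((2:ℝ)⁻¹ • (a + b)) := by
    rw [← hmid]; exact Metric.infDist_le_dist_of_mem hmidmem
  have h3 : C₀ * edgeLen σ ≤ dist (M.circ (M.Kof σ)) ((2:ℝ)⁻¹ • (a + b)) :=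
    le_trans (hreg σ hσ).1 h1
  calc C₀ * edgeLen σ ^ 2 / 4
      ≤ 4⁻¹ * (dist a b * dist (M.circ (M.Kof σ)) ((2:ℝ)⁻¹ • (a + b))) := by
        rw [hlen] at hlenpos h3 ⊢
        nlinarith [dist_nonneg (x := M.circ (M.Kof σ)) (y := (2:ℝ)⁻¹ • (a + b))]
    _ ≤ triArea (M.Kof σ) := harea

lemma stmt9_area_pos {C₀ : ℝ} (hreg : M.regular C₀) (hC₀ : 0 < C₀) {σ : Finset E2}
    (hσ : σ ∈ M.edges) : 0 < triArea (M.Kof σ) := by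
  obtain ⟨hK, hKe⟩ := stmt9_Kof_spec M hσ
  obtain ⟨a, b, hab, hσeq, _, _, _, hlenpos, _, _, _, _, _⟩ := stmt9_edge_facts M hK hKe
  have h1 := stmt9_area_lower M hreg hC₀ hσ
  have h2 := mul_pos hC₀ (pow_pos hlenpos 2)
  linarith

lemma stmt9_dEdge_le {C₀ : ℝ} (hreg : M.regular C₀) (hC₀ : 0 < C₀) {σ : Finset E2}
    (hσ : σ ∈ M.edges) :
    M.dEdge σ ≤ (2⁻¹ + 2 / C₀) * edgeLen σ := by
  obtain ⟨hK, hKe⟩ := stmt9_Kof_spec M hσ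
  obtain ⟨a, b, hab, hσeq, hia, hjb, hdist, hlenpos, hmid, hmidmem, hlen, haK, hbK⟩ :=
    stmt9_edge_facts M hK hKe
  have hms : C₀ * M.meshSize ≤ edgeLen σ := (hreg σ hσ).2
  have hms' : M.meshSize ≤ edgeLen σ / C₀ := by
    rw [le_div_iff₀ hC₀]; linarith [hms]
  obtain ⟨i, hi⟩ := hia
  have hdKa : dist (M.circ (M.Kof σ)) a ≤ M.meshSize := by
    rw [← hi]; exact stmt9_dist_circ_vertex M hK i
  rw [FVMesh.dEdge]
  split_ifs with hint
  · obtain ⟨hL, hLe, hLK⟩ := stmt9_Lof_spec M hint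
    obtain ⟨i', j', hij', hσeq'⟩ := stmt9_edge_form hLe
    have haσ : a ∈ σ := by rw [hσeq]; simp
    rw [hσeq'] at haσ
    simp only [Finset.mem_insert, Finset.mem_singleton] at haσ
    have hdLa : dist (M.circ (M.Lof σ)) a ≤ M.meshSize := by
      rcases haσ with h | h
      · rw [h]; exact stmt9_dist_circ_vertex M hL i'
      · rw [h]; exact stmt9_dist_circ_vertex M hL j'
    have hstep : 2 * (edgeLen σ / C₀) = (2 / C₀) * edgeLen σ := by ring
    have hlast : (2 / C₀) * edgeLen σ ≤ (2⁻¹ + 2 / C₀) * edgeLen σ := by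
      nlinarith [hlenpos.le]
    calc dist (M.circ (M.Kof σ)) (M.circ (M.Lof σ))
        ≤ dist (M.circ (M.Kof σ)) a + dist a (M.circ (M.Lof σ)) := dist_triangle _ _ _
      _ ≤ M.meshSize + M.meshSize := by rw [dist_comm a]; linarith
      _ ≤ 2 * (edgeLen σ / C₀) := by linarith
      _ = (2 / C₀) * edgeLen σ := hstep
      _ ≤ (2⁻¹ + 2 / C₀) * edgeLen σ := hlast
  · have hmida : dist (edgeMid σ) a = 2⁻¹ * edgeLen σ := by
      rw [hmid, hlen, dist_eq_norm, dist_eq_norm]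
      have hh : (2:ℝ)⁻¹ • (a + b) - a = (2:ℝ)⁻¹ • (b - a) := by module
      rw [hh, norm_smul, norm_sub_rev]
      simp [Real.norm_eq_abs]
    have hdiffnn : (0:ℝ) ≤ edgeLen σ / C₀ := by positivity
    have hrearr : (2⁻¹ + 2 / C₀) * edgeLen σ - (2⁻¹ * edgeLen σ + 2 * (edgeLen σ / C₀)) =
        0 := by ring
    calc dist (edgeMid σ) (M.circ (M.Kof σ))
        ≤ dist (edgeMid σ) a + dist a (M.circ (M.Kof σ)) := dist_triangle _ _ _
      _ ≤ 2⁻¹ * edgeLen σ + M.meshSize := by rw [hmida, dist_comm]; linarith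
      _ ≤ 2⁻¹ * edgeLen σ + edgeLen σ / C₀ := by linarith
      _ ≤ (2⁻¹ + 2 / C₀) * edgeLen σ := by linarith [hrearr, hdiffnn]

lemma stmt9_dEdge_pos_ext {C₀ : ℝ} (hreg : M.regular C₀) (hC₀ : 0 < C₀) {σ : Finset E2}
    (hσ : σ ∈ M.edges) (hnint : ¬ M.isIntEdge σ) : 0 < M.dEdge σ := by
  rw [FVMesh.dEdge, if_neg hnint]
  obtain ⟨hK, hKe⟩ := stmt9_Kof_spec M hσ
  obtain ⟨a, b, hab, hσeq, _, _, _, hlenpos, hmid, hmidmem, hlen, _, _⟩ :=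
    stmt9_edge_facts M hK hKe
  have h1 : C₀ * edgeLen σ ≤ Metric.infDist (M.circ (M.Kof σ)) (edgeSet σ) := (hreg σ hσ).1
  have h2 : Metric.infDist (M.circ (M.Kof σ)) (edgeSet σ) ≤
      dist (M.circ (M.Kof σ)) (edgeMid σ) := Metric.infDist_le_dist_of_mem hmidmem
  have h3 : 0 < dist (M.circ (M.Kof σ)) (edgeMid σ) :=
    lt_of_lt_of_le (mul_pos hC₀ hlenpos) (h1.trans h2)
  rw [dist_comm] at h3; exact h3

lemma stmt9_dEdge_pos_int {C₀ : ℝ} (hreg : M.regular C₀) (hC₀ : 0 < C₀) {σ : Finset E2}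
    (hint : M.isIntEdge σ) : 0 < M.dEdge σ := by
  have hedge : σ ∈ M.edges := hint.1
  obtain ⟨hK, hKe⟩ := stmt9_Kof_spec M hedge
  obtain ⟨hL, hLe, hLK⟩ := stmt9_Lof_spec M hint
  rw [FVMesh.dEdge, if_pos hint, dist_pos]
  intro heq
  have hxK : M.circ (M.Kof σ) ∈ triSet (M.Kof σ) := M.circ_mem _ hK
  have hxL : M.circ (M.Kof σ) ∈ triSet (M.Lof σ) := by rw [heq]; exact M.circ_mem _ hL
  have hKL : M.Kof σ ≠ M.Lof σ := Ne.symm hLK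
  rcases M.conform _ hK _ hL hKL with hemp | ⟨p, hpK, hpL, hinter⟩ | ⟨σ'', h1, h2, hinter⟩
  · have hmem : M.circ (M.Kof σ) ∈ triSet (M.Kof σ) ∩ triSet (M.Lof σ) := ⟨hxK, hxL⟩
    rw [hemp] at hmem; exact hmem
  · have hxp : M.circ (M.Kof σ) = p := by
      have hmem : M.circ (M.Kof σ) ∈ triSet (M.Kof σ) ∩ triSet (M.Lof σ) := ⟨hxK, hxL⟩
      rw [hinter] at hmem; exact hmem
    obtain ⟨i, hi⟩ := hpK
    have hz : ∀ j : Fin 3, M.Kof σ j = M.circ (M.Kof σ) := by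
      intro j
      have hj := M.circ_equidist _ hK j i
      have hzero : dist (M.circ (M.Kof σ)) (M.Kof σ i) = 0 := by
        rw [hi, hxp]; simp
      rw [hzero] at hj
      exact (dist_eq_zero.1 hj).symm
    have h01 : M.Kof σ 0 = M.Kof σ 1 := by rw [hz 0, hz 1]
    exact absurd ((M.indep _ hK).injective h01) (by decide)
  · have hσ''edge : σ'' ∈ M.edges := Finset.mem_biUnion.2 ⟨_, hK, h1⟩
    have hxσ'' : M.circ (M.Kof σ) ∈ edgeSet σ'' := by
      have hmem : M.circ (M.Kof σ) ∈ triSet (M.Kof σ) ∩ triSet (M.Lof σ) := ⟨hxK, hxL⟩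
      rw [hinter] at hmem; exact hmem
    obtain ⟨hK'', hK''e⟩ := stmt9_Kof_spec M hσ''edge
    have hKof'' : M.Kof σ'' ∈ M.tris.filter (fun w => σ'' ∈ triEdges w) :=
      Finset.mem_filter.2 ⟨hK'', hK''e⟩
    have hsub : ({M.Kof σ, M.Lof σ} : Finset _) ⊆ M.tris.filter (fun w => σ'' ∈ triEdges w) := by
      intro z hz
      rcases Finset.mem_insert.1 hz with rfl | hz
      · exact Finset.mem_filter.2 ⟨hK, h1⟩
      · rw [Finset.mem_singleton] at hz; subst hz; exact Finset.mem_filter.2 ⟨hL, h2⟩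
    have hcard2 : (M.tris.filter (fun w => σ'' ∈ triEdges w)).card ≤ 2 := by
      rcases M.edge_count _ hK _ h1 with h | h <;> omega
    have hfeq : ({M.Kof σ, M.Lof σ} : Finset _) = M.tris.filter (fun w => σ'' ∈ triEdges w) :=
      Finset.eq_of_subset_of_card_le hsub (by rw [Finset.card_pair hKL]; exact hcard2)
    have hmem'' : M.Kof σ'' ∈ ({M.Kof σ, M.Lof σ} : Finset _) := by rw [hfeq]; exact hKof''
    have hcirc'' : M.circ (M.Kof σ'') = M.circ (M.Kof σ) := by
      rcases Finset.mem_insert.1 hmem'' with h | h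
      · rw [h]
      · rw [Finset.mem_singleton] at h; rw [h, ← heq]
    have hreg'' := (hreg σ'' hσ''edge).1
    have hzero : Metric.infDist (M.circ (M.Kof σ'')) (edgeSet σ'') = 0 := by
      rw [hcirc'']; exact Metric.infDist_zero_of_mem hxσ''
    obtain ⟨a, b, hab'', _, _, _, _, hlenpos'', _, _, _, _, _⟩ := stmt9_edge_facts M hK'' hK''e
    rw [hzero] at hreg''
    nlinarith [hlenpos'', hC₀]

lemma stmt9_arith {C₀ len d aK aL t n2 : ℝ} (hC₀ : 0 < C₀) (hlen : 0 < len) (hd : 0 < d)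
    (hKpos : 0 < aK) (hLnn : 0 ≤ aL) (harea : C₀ * len ^ 2 / 4 ≤ aK)
    (hdle : d ≤ (2⁻¹ + 2 / C₀) * len) (ht2 : t ^ 2 ≤ n2) (hn2 : 0 ≤ n2) :
    aK * (3 * len / (aK + aL) * t) ^ 2 + aL * (3 * len / (aK + aL) * t) ^ 2 ≤
      (36 * (2⁻¹ + 2 / C₀) / C₀) * (len / d * n2) := by
  have hA : 0 < aK + aL := by linarith
  have hκpos : (0:ℝ) < 2⁻¹ + 2 / C₀ := by positivity
  have hCpos : (0:ℝ) < 36 * (2⁻¹ + 2 / C₀) / C₀ := by positivity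
  have lhs_eq : aK * (3 * len / (aK + aL) * t) ^ 2 + aL * (3 * len / (aK + aL) * t) ^ 2 =
      9 * len ^ 2 * t ^ 2 / (aK + aL) := by
    field_simp
    ring
  have key : 9 * len * d ≤ (36 * (2⁻¹ + 2 / C₀) / C₀) * (aK + aL) := by
    have e2 : (36 * (2⁻¹ + 2 / C₀) / C₀) * (C₀ * len ^ 2 / 4) =
        9 * (2⁻¹ + 2 / C₀) * len ^ 2 := by field_simp; ring
    calc 9 * len * d ≤ 9 * (2⁻¹ + 2 / C₀) * len ^ 2 := by nlinarith [hlen.le]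
      _ = (36 * (2⁻¹ + 2 / C₀) / C₀) * (C₀ * len ^ 2 / 4) := e2.symm
      _ ≤ (36 * (2⁻¹ + 2 / C₀) / C₀) * (aK + aL) := by
          apply mul_le_mul_of_nonneg_left _ hCpos.le
          linarith
  have hrhs : (36 * (2⁻¹ + 2 / C₀) / C₀) * (len / d * n2) =
      (36 * (2⁻¹ + 2 / C₀) / C₀) * len * n2 / d := by ring
  rw [lhs_eq, hrhs, div_le_div_iff₀ hA hd]
  have h6 : 9 * len ^ 2 * t ^ 2 * d ≤ 9 * len ^ 2 * n2 * d := by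
    have h6a : 9 * len ^ 2 * t ^ 2 ≤ 9 * len ^ 2 * n2 :=
      mul_le_mul_of_nonneg_left ht2 (by positivity)
    exact mul_le_mul_of_nonneg_right h6a hd.le
  have h7 : 9 * len ^ 2 * n2 * d = (9 * len * d) * (len * n2) := by ring
  have h8 : (9 * len * d) * (len * n2) ≤ ((36 * (2⁻¹ + 2 / C₀) / C₀) * (aK + aL)) * (len * n2) :=
    mul_le_mul_of_nonneg_right key (mul_nonneg hlen.le hn2)
  have h9 : ((36 * (2⁻¹ + 2 / C₀) / C₀) * (aK + aL)) * (len * n2) =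
      (36 * (2⁻¹ + 2 / C₀) / C₀) * len * n2 * (aK + aL) := by ring
  linarith

lemma stmt9_arith_ext {C₀ len d aK t n2 : ℝ} (hC₀ : 0 < C₀) (hlen : 0 < len) (hd : 0 < d)
    (hKpos : 0 < aK) (harea : C₀ * len ^ 2 / 4 ≤ aK)
    (hdle : d ≤ (2⁻¹ + 2 / C₀) * len) (ht2 : t ^ 2 ≤ n2) (hn2 : 0 ≤ n2) :
    aK * (-(3 * len / aK) * t) ^ 2 ≤ (36 * (2⁻¹ + 2 / C₀) / C₀) * (len / d * n2) := by
  have h := stmt9_arith (aL := 0) hC₀ hlen hd hKpos le_rfl harea hdle ht2 hn2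
  have heq : aK * (-(3 * len / aK) * t) ^ 2 =
      aK * (3 * len / (aK + 0) * t) ^ 2 + 0 * (3 * len / (aK + 0) * t) ^ 2 := by ring
  rw [heq]; exact h

lemma stmt9_int_edge_bound {C₀ : ℝ} (hreg : M.regular C₀) (hC₀ : 0 < C₀) (c : P0fun)
    {σ : Finset E2} (hσ : σ ∈ M.intEdges) :
    triArea (M.Kof σ) * (M.divhVal c σ) ^ 2 + triArea (M.Lof σ) * (M.divhVal c σ) ^ 2 ≤
      (36 * (2⁻¹ + 2 / C₀) / C₀) * (M.tauEdge σ * ‖c (M.Lof σ) - c (M.Kof σ)‖ ^ 2) := by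
  have hint : M.isIntEdge σ := (Finset.mem_filter.1 hσ).2
  have hedge : σ ∈ M.edges := (Finset.mem_filter.1 hσ).1
  obtain ⟨hK, hKe⟩ := stmt9_Kof_spec M hedge
  obtain ⟨a, b, hab, _, _, _, _, hlenpos, _, _, _, _, _⟩ := stmt9_edge_facts M hK hKe
  have harea : C₀ * edgeLen σ ^ 2 / 4 ≤ triArea (M.Kof σ) := stmt9_area_lower M hreg hC₀ hedge
  have hKpos : 0 < triArea (M.Kof σ) := stmt9_area_pos M hreg hC₀ hedge
  have hLnn : 0 ≤ triArea (M.Lof σ) := ENNReal.toReal_nonneg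
  have hd : 0 < M.dEdge σ := stmt9_dEdge_pos_int M hreg hC₀ hint
  have hdle : M.dEdge σ ≤ (2⁻¹ + 2 / C₀) * edgeLen σ := stmt9_dEdge_le M hreg hC₀ hedge
  have hnrm : ‖M.nrm (M.Kof σ) σ‖ = 1 := M.nrm_unit _ hK _ hKe
  have hn2 : (0:ℝ) ≤ ‖c (M.Lof σ) - c (M.Kof σ)‖ ^ 2 := by positivity
  have ht : |(inner ℝ (c (M.Lof σ) - c (M.Kof σ)) (M.nrm (M.Kof σ) σ) : ℝ)| ≤
      ‖c (M.Lof σ) - c (M.Kof σ)‖ := by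
    calc |(inner ℝ (c (M.Lof σ) - c (M.Kof σ)) (M.nrm (M.Kof σ) σ) : ℝ)| ≤
        ‖c (M.Lof σ) - c (M.Kof σ)‖ * ‖M.nrm (M.Kof σ) σ‖ := abs_real_inner_le_norm _ _
      _ = _ := by rw [hnrm, mul_one]
  have ht2 : (inner ℝ (c (M.Lof σ) - c (M.Kof σ)) (M.nrm (M.Kof σ) σ) : ℝ) ^ 2 ≤
      ‖c (M.Lof σ) - c (M.Kof σ)‖ ^ 2 := by
    rw [← sq_abs]
    exact pow_le_pow_left₀ (abs_nonneg _) ht 2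
  have hdval : M.divhVal c σ = 3 * edgeLen σ / (triArea (M.Kof σ) + triArea (M.Lof σ)) *
      (inner ℝ (c (M.Lof σ) - c (M.Kof σ)) (M.nrm (M.Kof σ) σ) : ℝ) := by
    rw [FVMesh.divhVal, if_pos hint]
  rw [hdval, FVMesh.tauEdge]
  exact stmt9_arith hC₀ hlenpos hd hKpos hLnn harea hdle ht2 hn2

lemma stmt9_ext_edge_bound {C₀ : ℝ} (hreg : M.regular C₀) (hC₀ : 0 < C₀) (c : P0fun)
    {σ : Finset E2} (hσ : σ ∈ M.extEdges) :
    triArea (M.Kof σ) * (M.divhVal c σ) ^ 2 ≤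
      (36 * (2⁻¹ + 2 / C₀) / C₀) * (M.tauEdge σ * ‖c (M.Kof σ)‖ ^ 2) := by
  have hext : M.isExtEdge σ := (Finset.mem_filter.1 hσ).2
  have hedge : σ ∈ M.edges := (Finset.mem_filter.1 hσ).1
  have hnint : ¬ M.isIntEdge σ := by
    rintro ⟨-, h2⟩
    have h1 := hext.2
    rw [h1] at h2
    norm_num at h2
  obtain ⟨hK, hKe⟩ := stmt9_Kof_spec M hedge
  obtain ⟨a, b, hab, _, _, _, _, hlenpos, _, _, _, _, _⟩ := stmt9_edge_facts M hK hKe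
  have harea : C₀ * edgeLen σ ^ 2 / 4 ≤ triArea (M.Kof σ) := stmt9_area_lower M hreg hC₀ hedge
  have hKpos : 0 < triArea (M.Kof σ) := stmt9_area_pos M hreg hC₀ hedge
  have hd : 0 < M.dEdge σ := stmt9_dEdge_pos_ext M hreg hC₀ hedge hnint
  have hdle : M.dEdge σ ≤ (2⁻¹ + 2 / C₀) * edgeLen σ := stmt9_dEdge_le M hreg hC₀ hedge
  have hnrm : ‖M.nrm (M.Kof σ) σ‖ = 1 := M.nrm_unit _ hK _ hKe
  have hn2 : (0:ℝ) ≤ ‖c (M.Kof σ)‖ ^ 2 := by positivity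
  have ht : |(inner ℝ (c (M.Kof σ)) (M.nrm (M.Kof σ) σ) : ℝ)| ≤ ‖c (M.Kof σ)‖ := by
    calc |(inner ℝ (c (M.Kof σ)) (M.nrm (M.Kof σ) σ) : ℝ)| ≤
        ‖c (M.Kof σ)‖ * ‖M.nrm (M.Kof σ) σ‖ := abs_real_inner_le_norm _ _
      _ = _ := by rw [hnrm, mul_one]
  have ht2 : (inner ℝ (c (M.Kof σ)) (M.nrm (M.Kof σ) σ) : ℝ) ^ 2 ≤ ‖c (M.Kof σ)‖ ^ 2 := by
    rw [← sq_abs]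
    exact pow_le_pow_left₀ (abs_nonneg _) ht 2
  have hdval : M.divhVal c σ = -(3 * edgeLen σ / triArea (M.Kof σ)) *
      (inner ℝ (c (M.Kof σ)) (M.nrm (M.Kof σ) σ) : ℝ) := by
    rw [FVMesh.divhVal, if_neg hnint]
  rw [hdval, FVMesh.tauEdge]
  exact stmt9_arith_ext hC₀ hlenpos hd hKpos harea hdle ht2 hn2

end Stmt9Aux

/-- Proposition 5: stability of the discrete divergence,
`|div_h v_h|_{L²} ≤ C ‖v_h‖_h`. -/
theorem stmt9 (Ω : Set E2) (hΩo : IsOpen Ω) (hΩb : Bornology.IsBounded Ω)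
    (C₀ : ℝ) (hC₀ : 0 < C₀) :
    ∃ C > (0:ℝ), ∀ M : FVMesh Ω, M.regular C₀ →
      ∀ c : P0fun, ∀ D : BrokenS, M.IsDivh c D →
        Real.sqrt (∑ K ∈ M.tris, ∫ x in triSet K, (D K x) ^ 2) ≤ C * M.normh c := by
  classical
  set C₁ : ℝ := 36 * (2⁻¹ + 2 / C₀) / C₀ with hC₁
  have hC₁pos : 0 < C₁ := by rw [hC₁]; positivity
  refine ⟨Real.sqrt (3 * C₁), Real.sqrt_pos.2 (by positivity), ?_⟩
  intro M hreg c D hD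
  set g : (Fin 3 → E2) → Finset E2 → ℝ :=
    fun K σ => triArea K * (M.divhVal c σ) ^ 2 with hg
  have stepA : ∀ K ∈ M.tris,
      (∫ x in triSet K, (D K x) ^ 2) ≤ 3 * ∑ σ ∈ triEdges K, g K σ := by
    intro K hK
    obtain ⟨φ, hφ⟩ := hD.1.1 K hK
    have hval : ∀ σ ∈ triEdges K, φ (edgeMid σ) = M.divhVal c σ := by
      intro σ hσ
      rw [← hD.2 K hK σ hσ, hφ]
    have hinj := (M.indep K hK).injective
    have hb := stmt9_tri_int_bound K hinj φ (fun σ => M.divhVal c σ) hval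
    calc (∫ x in triSet K, (D K x) ^ 2) = ∫ x in triSet K, (φ x) ^ 2 := by rw [hφ]
      _ ≤ triArea K * (3 * ∑ σ ∈ triEdges K, (M.divhVal c σ) ^ 2) := hb
      _ = 3 * ∑ σ ∈ triEdges K, g K σ := by
          rw [hg, ← Finset.mul_sum]; ring
  have stepB : ∑ K ∈ M.tris, ∑ σ ∈ triEdges K, g K σ =
      ∑ σ ∈ M.edges, ∑ K ∈ M.tris.filter (fun w => σ ∈ triEdges w), g K σ := by
    have h1 : ∀ K ∈ M.tris, ∑ σ ∈ triEdges K, g K σ =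
        ∑ σ ∈ M.edges.filter (fun σ => σ ∈ triEdges K), g K σ := by
      intro K hK
      congr 1
      ext σ
      simp only [Finset.mem_filter]
      constructor
      · intro h; exact ⟨Finset.mem_biUnion.2 ⟨K, hK, h⟩, h⟩
      · exact fun h => h.2
    rw [Finset.sum_congr rfl h1]
    simp_rw [Finset.sum_filter]
    rw [Finset.sum_comm]
  have hsplit : ∀ F : Finset E2 → ℝ, ∑ σ ∈ M.edges, F σ =
      ∑ σ ∈ M.intEdges, F σ + ∑ σ ∈ M.extEdges, F σ := by
    intro F
    rw [← Finset.sum_filter_add_sum_filter_not M.edges (fun σ => M.isIntEdge σ)]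
    congr 1
    apply Finset.sum_congr _ fun _ _ => rfl
    ext σ
    simp only [Finset.mem_filter, FVMesh.extEdges]
    constructor
    · rintro ⟨hs, hn⟩
      refine ⟨hs, hs, ?_⟩
      rcases stmt9_edge_card M hs with h1 | h2
      · exact h1
      · exact absurd ⟨hs, h2⟩ hn
    · rintro ⟨hs, hext⟩
      refine ⟨hs, fun hint => ?_⟩
      have e1 := hint.2
      have e2 := hext.2
      rw [e2] at e1
      norm_num at e1
  have hintsum : ∑ σ ∈ M.intEdges, (∑ K ∈ M.tris.filter (fun w => σ ∈ triEdges w), g K σ) ≤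
      C₁ * ∑ σ ∈ M.intEdges, M.tauEdge σ * ‖c (M.Lof σ) - c (M.Kof σ)‖ ^ 2 := by
    rw [Finset.mul_sum]
    apply Finset.sum_le_sum
    intro σ hσ
    have hint : M.isIntEdge σ := (Finset.mem_filter.1 hσ).2
    obtain ⟨hL, hLe, hLK⟩ := stmt9_Lof_spec M hint
    rw [stmt9_filter_int_eq M hint, Finset.sum_pair (Ne.symm hLK)]
    exact stmt9_int_edge_bound M hreg hC₀ c hσ
  have hextsum : ∑ σ ∈ M.extEdges, (∑ K ∈ M.tris.filter (fun w => σ ∈ triEdges w), g K σ) ≤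
      C₁ * ∑ σ ∈ M.extEdges, M.tauEdge σ * ‖c (M.Kof σ)‖ ^ 2 := by
    rw [Finset.mul_sum]
    apply Finset.sum_le_sum
    intro σ hσ
    have hext : M.isExtEdge σ := (Finset.mem_filter.1 hσ).2
    rw [stmt9_filter_ext_eq M hext, Finset.sum_singleton]
    exact stmt9_ext_edge_bound M hreg hC₀ c hσ
  have hfinal : ∑ K ∈ M.tris, (∫ x in triSet K, (D K x) ^ 2) ≤ 3 * C₁ * M.normhSq c := by
    calc ∑ K ∈ M.tris, (∫ x in triSet K, (D K x) ^ 2)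
        ≤ ∑ K ∈ M.tris, 3 * ∑ σ ∈ triEdges K, g K σ := Finset.sum_le_sum stepA
      _ = 3 * ∑ K ∈ M.tris, ∑ σ ∈ triEdges K, g K σ := by rw [Finset.mul_sum]
      _ = 3 * ∑ σ ∈ M.edges, ∑ K ∈ M.tris.filter (fun w => σ ∈ triEdges w), g K σ := by
          rw [stepB]
      _ = 3 * (∑ σ ∈ M.intEdges, (∑ K ∈ M.tris.filter (fun w => σ ∈ triEdges w), g K σ) +
            ∑ σ ∈ M.extEdges, (∑ K ∈ M.tris.filter (fun w => σ ∈ triEdges w), g K σ)) := by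
          rw [hsplit]
      _ ≤ 3 * (C₁ * ∑ σ ∈ M.intEdges, M.tauEdge σ * ‖c (M.Lof σ) - c (M.Kof σ)‖ ^ 2 +
            C₁ * ∑ σ ∈ M.extEdges, M.tauEdge σ * ‖c (M.Kof σ)‖ ^ 2) := by
          have := add_le_add hintsum hextsum
          linarith
      _ = 3 * C₁ * M.normhSq c := by rw [FVMesh.normhSq]; ring
  calc Real.sqrt (∑ K ∈ M.tris, ∫ x in triSet K, (D K x) ^ 2)
      ≤ Real.sqrt (3 * C₁ * M.normhSq c) := Real.sqrt_le_sqrt hfinal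
    _ = Real.sqrt (3 * C₁) * Real.sqrt (M.normhSq c) := Real.sqrt_mul (by positivity) _
    _ = Real.sqrt (3 * C₁) * M.normh c := by rw [FVMesh.normh]


end
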